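/- In the braid group of type A₂, i.e. the group with presentation ⟨σ₁, σ₂ ∣ σ₁σ₂σ₁ = σ₂σ₁σ₂⟩ (the braid group on 3 strands), the center equals the cyclic subgroup generated by the element Δ_A = (σ₁σ₂)³. -/

import Mathlib

/-- Relator of the braid group of type `A₂` (braid group on 3 strands):
`σ₁σ₂σ₁σ₂⁻¹σ₁⁻¹σ₂⁻¹`. -/
def A2BraidRels : Set (FreeGroup (Fin 2)) :=
  { FreeGroup.of 0 * FreeGroup.of 1 * FreeGroup.of 0 *
      (FreeGroup.of 1)⁻¹ * (FreeGroup.of 0)⁻¹ * (FreeGroup.of 1)⁻¹ }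

namespace B3Aux

open Monoid

abbrev G := PresentedGroup A2BraidRels

noncomputable abbrev a : G := PresentedGroup.of 0
noncomputable abbrev b : G := PresentedGroup.of 1

lemma braid : a * b * a = b * a * b := by
  have h : PresentedGroup.mk A2BraidRels
      (FreeGroup.of 0 * FreeGroup.of 1 * FreeGroup.of 0 *
        (FreeGroup.of 1)⁻¹ * (FreeGroup.of 0)⁻¹ * (FreeGroup.of 1)⁻¹) = 1 := by
    refine (QuotientGroup.eq_one_iff _).mpr ?_
    exact Subgroup.subset_normalClosure (by simp [A2BraidRels])
  simp only [map_mul, map_inv] at h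
  have h2 : a * b * a = (a * b * a * b⁻¹ * a⁻¹ * b⁻¹) * (b * a * b) := by group
  rw [show PresentedGroup.mk A2BraidRels (FreeGroup.of 0) = a from rfl,
    show PresentedGroup.mk A2BraidRels (FreeGroup.of 1) = b from rfl] at h
  rw [h2, h, one_mul]

/-- The half twist `Δ₀ = σ₁σ₂σ₁`. -/
noncomputable abbrev Δ₀ : G := a * b * a

/-- The full twist `Δ = (σ₁σ₂)³`. -/
noncomputable abbrev Δ : G := (a * b) ^ 3

lemma d0_mul_a : Δ₀ * a = b * Δ₀ := by
  calc a * b * a * a = b * a * b * a := by rw [braid]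
  _ = b * (a * b * a) := by group

lemma d0_mul_b : Δ₀ * b = a * Δ₀ := by
  calc a * b * a * b = a * (b * a * b) := by group
  _ = a * (a * b * a) := by rw [braid]

lemma delta_eq : Δ = Δ₀ * Δ₀ := by
  have h : (a * b) ^ 3 = (a * b * a) * (b * a * b) := by
    rw [pow_succ, pow_succ, pow_one]; group
  rw [show Δ = (a*b)^3 from rfl, h, ← braid]

lemma delta_mul_a : Δ * a = a * Δ := by
  rw [delta_eq, mul_assoc, d0_mul_a, ← mul_assoc, d0_mul_b, mul_assoc]

lemma delta_mul_b : Δ * b = b * Δ := by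
  rw [delta_eq, mul_assoc, d0_mul_b, ← mul_assoc, d0_mul_a, mul_assoc]

lemma delta_central : Δ ∈ Subgroup.center G := by
  rw [Subgroup.mem_center_iff]
  intro g
  have : g ∈ Subgroup.centralizer {Δ} := by
    refine PresentedGroup.generated_by _ _ (fun j => ?_) g
    rw [Subgroup.mem_centralizer_iff]
    fin_cases j <;> rintro h (rfl : h = Δ)
    · exact delta_mul_a
    · exact delta_mul_b
  exact ((Subgroup.mem_centralizer_iff.mp this) Δ rfl).symm

noncomputable abbrev N : Subgroup G := Subgroup.zpowers Δ

instance : N.Normal := by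
  refine ⟨fun n hn g => ?_⟩
  obtain ⟨k, rfl⟩ := Subgroup.mem_zpowers_iff.mp hn
  have hc : Δ ^ k ∈ Subgroup.center G := Subgroup.zpow_mem _ delta_central k
  have : g * Δ ^ k * g⁻¹ = Δ ^ k := by
    rw [Subgroup.mem_center_iff.mp hc g]
    group
  rw [this]; exact hn

abbrev Q := G ⧸ N

/-! ### The free product `C₂ * C₃` -/

abbrev C2 := Multiplicative (ZMod 2)
abbrev C3 := Multiplicative (ZMod 3)

abbrev Mf : Bool → Type := fun i => cond i C2 C3

instance grpMf : ∀ i, Group (Mf i) := fun i =>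
  i.rec (inferInstanceAs (Group C3)) (inferInstanceAs (Group C2))

instance deqMf : ∀ i, DecidableEq (Mf i) := fun i =>
  i.rec (inferInstanceAs (DecidableEq C3)) (inferInstanceAs (DecidableEq C2))

instance finMf : ∀ i, Fintype (Mf i) := fun i =>
  i.rec (inferInstanceAs (Fintype C3)) (inferInstanceAs (Fintype C2))

abbrev H := Monoid.CoprodI Mf

abbrev x : Mf true := (Multiplicative.ofAdd (1 : ZMod 2) : C2)
abbrev y : Mf false := (Multiplicative.ofAdd (1 : ZMod 3) : C3)

noncomputable abbrev X : H := CoprodI.of x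
noncomputable abbrev Y : H := CoprodI.of y

lemma X_mul_X : X * X = 1 := by
  rw [← map_mul, show x * x = 1 by decide, map_one]

lemma Y_pow_three : Y * Y * Y = 1 := by
  rw [← map_mul, ← map_mul, show y * y * y = 1 by decide, map_one]

/-! ### The map `π : G → H` -/

noncomputable def fgen : Fin 2 → H := ![Y⁻¹ * X, X⁻¹ * Y ^ 2]

lemma braid_in_H : (Y⁻¹ * X) * (X⁻¹ * Y ^ 2) * (Y⁻¹ * X) =
    (X⁻¹ * Y ^ 2) * (Y⁻¹ * X) * (X⁻¹ * Y ^ 2) := by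
  have h1 : (Y⁻¹ * X) * (X⁻¹ * Y ^ 2) * (Y⁻¹ * X) = X := by group
  have h2 : (X⁻¹ * Y ^ 2) * (Y⁻¹ * X) * (X⁻¹ * Y ^ 2) = X⁻¹ * (Y * Y * Y) := by
    rw [show (Y:H) * Y * Y = Y ^ 3 by rw [pow_succ, pow_succ, pow_one]]; group
  rw [h1, h2, Y_pow_three, mul_one, inv_eq_iff_mul_eq_one.mpr X_mul_X]

lemma fgen_rels : ∀ r ∈ A2BraidRels, FreeGroup.lift fgen r = 1 := by
  intro r hr
  have : r = FreeGroup.of 0 * FreeGroup.of 1 * FreeGroup.of 0 *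
      (FreeGroup.of 1)⁻¹ * (FreeGroup.of 0)⁻¹ * (FreeGroup.of 1)⁻¹ := hr
  subst this
  simp only [map_mul, map_inv, FreeGroup.lift_apply_of]
  have h := braid_in_H
  rw [show fgen 0 = Y⁻¹ * X from rfl, show fgen 1 = X⁻¹ * Y ^ 2 from rfl]
  rw [mul_inv_eq_one, mul_inv_eq_iff_eq_mul, mul_inv_eq_iff_eq_mul]
  rw [h]

noncomputable def π : G →* H := PresentedGroup.toGroup fgen_rels

lemma π_a : π a = Y⁻¹ * X := by
  rw [show π a = fgen 0 from PresentedGroup.toGroup.of fgen_rels]; rfl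

lemma π_b : π b = X⁻¹ * Y ^ 2 := by
  rw [show π b = fgen 1 from PresentedGroup.toGroup.of fgen_rels]; rfl

lemma π_d0 : π Δ₀ = X := by
  have : π Δ₀ = π a * π b * π a := by simp [map_mul]
  rw [this, π_a, π_b]
  group

lemma π_ab : π (a * b) = Y := by
  rw [map_mul, π_a, π_b]
  have : Y⁻¹ * X * (X⁻¹ * Y ^ 2) = Y := by group
  rw [this]

lemma π_delta : π Δ = 1 := by
  have : π Δ = (π (a * b)) ^ 3 := by rw [← map_pow]
  rw [this, π_ab, show (Y:H) ^ 3 = Y * Y * Y by rw [pow_succ, pow_succ, pow_one], Y_pow_three]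

/-! ### The map `ψ : H → Q` -/

noncomputable def zmodHom {Q' : Type*} [Group Q'] (n : ℕ) (g : Q') (hg : g ^ n = 1) :
    Multiplicative (ZMod n) →* Q' :=
  AddMonoidHom.toMultiplicativeLeft
    (ZMod.lift n ⟨zmultiplesHom (Additive Q') (Additive.ofMul g), by
      simp only [zmultiplesHom_apply]
      rw [show ((n : ℤ) • Additive.ofMul g) = Additive.ofMul (g ^ (n : ℤ)) from rfl]
      rw [zpow_natCast, hg]; rfl⟩)

lemma zmodHom_gen {Q' : Type*} [Group Q'] (n : ℕ) [NeZero n] (g : Q') (hg : g ^ n = 1) :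
    zmodHom n g hg (Multiplicative.ofAdd (1 : ZMod n)) = g := by
  have h1 : (1 : ZMod n) = ((1 : ℤ) : ZMod n) := by simp
  have : zmodHom n g hg (Multiplicative.ofAdd (1 : ZMod n)) =
      Additive.toMul (ZMod.lift n ⟨zmultiplesHom (Additive Q') (Additive.ofMul g), by
        simp only [zmultiplesHom_apply]
        rw [show ((n : ℤ) • Additive.ofMul g) = Additive.ofMul (g ^ (n : ℤ)) from rfl]
        rw [zpow_natCast, hg]; rfl⟩ ((1 : ZMod n))) := rfl
  rw [this, h1, ZMod.lift_coe]
  simp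

/-! ### ψ : H →* Q -/

noncomputable def qmap : G →* Q := QuotientGroup.mk' N

lemma q_d0_sq : (qmap Δ₀) ^ 2 = 1 := by
  rw [← map_pow]
  have h : Δ₀ ^ 2 = Δ := by rw [delta_eq, pow_two]
  rw [h]
  exact (QuotientGroup.eq_one_iff Δ).mpr (Subgroup.mem_zpowers Δ)

lemma q_ab_cube : (qmap (a * b)) ^ 3 = 1 := by
  rw [← map_pow]
  exact (QuotientGroup.eq_one_iff Δ).mpr (Subgroup.mem_zpowers Δ)

noncomputable def ψ : H →* Q :=
  Monoid.CoprodI.lift (fun i =>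
    (i.rec (zmodHom 3 (qmap (a * b)) q_ab_cube) (zmodHom 2 (qmap Δ₀) q_d0_sq) : Mf i →* Q))

lemma ψ_X : ψ X = qmap Δ₀ := by
  rw [show (X : H) = Monoid.CoprodI.of x from rfl, ψ, Monoid.CoprodI.lift_of]
  exact zmodHom_gen 2 _ _

lemma ψ_Y : ψ Y = qmap (a * b) := by
  rw [show (Y : H) = Monoid.CoprodI.of y from rfl, ψ, Monoid.CoprodI.lift_of]
  exact zmodHom_gen 3 _ _

lemma ψπ : ∀ g : G, ψ (π g) = qmap g := by
  have h : ψ.comp π = qmap := by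
    refine PresentedGroup.ext fun i => ?_
    fin_cases i
    · show ψ (π a) = qmap a
      rw [π_a, map_mul, map_inv, ψ_X, ψ_Y, ← map_inv, ← map_mul]
      congr 1
      group
    · show ψ (π b) = qmap b
      rw [π_b, map_mul, map_inv, map_pow, ψ_X, ψ_Y, ← map_inv, ← map_pow, ← map_mul]
      congr 1
      rw [pow_two]
      group
  exact fun g => DFunLike.congr_fun h g

/-! ### Elements of `H` commuting with `X` and `Y` are trivial -/

open Monoid.CoprodI in
lemma word_prod_cons (l : (Σ i, Mf i)) (L : List (Σ i, Mf i)) (h1 h2) :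
    Word.prod (⟨l :: L, h1, h2⟩ : Word Mf) =
      Monoid.CoprodI.of l.2 *
        Word.prod (⟨L, fun m hm => h1 m (List.mem_cons_of_mem _ hm), h2.tail⟩ : Word Mf) := by
  simp [Word.prod]

open Monoid.CoprodI in
lemma word_prod_append (L : List (Σ i, Mf i)) (l : (Σ i, Mf i)) (h1 h2 h1' h2') :
    Word.prod (⟨L ++ [l], h1, h2⟩ : Word Mf) =
      Word.prod (⟨L, h1', h2'⟩ : Word Mf) * Monoid.CoprodI.of l.2 := by
  simp [Word.prod]

open Monoid.CoprodI in
lemma word_prod_injective : Function.Injective (Word.prod : Word Mf → H) :=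
  fun w1 w2 h => (Word.equiv (M := Mf)).symm.injective h

lemma chain_append_single (L : List (Σ i, Mf i))
    (hch : L.IsChain fun l l' => l.1 ≠ l'.1) (hL : L ≠ []) (e : Σ i, Mf i)
    (he : (L.getLast hL).1 ≠ e.1) :
    (L ++ [e]).IsChain fun l l' => l.1 ≠ l'.1 := by
  refine List.isChain_append.mpr ⟨hch, List.isChain_singleton _, ?_⟩
  intro p hp q hq
  rw [List.getLast?_eq_getLast hL] at hp
  simp only [Option.mem_def, Option.some.injEq, List.head?_cons] at hp hq
  subst hp; subst hq
  exact he

lemma eqx : ∀ m : Mf true, m ≠ 1 → m = x := by decide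
lemma eqy : ∀ m : Mf false, m ≠ 1 → m = y ∨ m = y * y := by decide

open Monoid.CoprodI in
lemma sameEnds (L : List (Σ i, Mf i)) (hne : ∀ l ∈ L, l.2 ≠ 1)
    (hch : L.IsChain fun l l' => l.1 ≠ l'.1) (hL : L ≠ []) (e : Σ i, Mf i) (he : e.2 ≠ 1)
    (hhd : ∀ p ∈ L.head?, e.1 ≠ p.1) (hlast : (L.getLast hL).1 ≠ e.1)
    (hcomm : Word.prod (⟨L, hne, hch⟩ : Word Mf) * Monoid.CoprodI.of e.2 =
      Monoid.CoprodI.of e.2 * Word.prod (⟨L, hne, hch⟩ : Word Mf)) : False := by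
  have ne₁ : ∀ l ∈ e :: L, l.2 ≠ 1 := by
    rintro l hl
    rcases List.mem_cons.mp hl with rfl | hl
    · exact he
    · exact hne l hl
  have ch₁ : (e :: L).IsChain fun l l' => l.1 ≠ l'.1 := List.isChain_cons.mpr ⟨hhd, hch⟩
  have ne₂ : ∀ l ∈ L ++ [e], l.2 ≠ 1 := by
    rintro l hl
    rcases List.mem_append.mp hl with hl | hl
    · exact hne l hl
    · simp only [List.mem_singleton] at hl; subst hl; exact he
  have ch₂ := chain_append_single L hch hL e hlast
  have hp1 : Word.prod (⟨e :: L, ne₁, ch₁⟩ : Word Mf) =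
      Monoid.CoprodI.of e.2 * Word.prod (⟨L, hne, hch⟩ : Word Mf) := word_prod_cons e L ne₁ ch₁
  have hp2 : Word.prod (⟨L ++ [e], ne₂, ch₂⟩ : Word Mf) =
      Word.prod (⟨L, hne, hch⟩ : Word Mf) * Monoid.CoprodI.of e.2 :=
    word_prod_append L e ne₂ ch₂ hne hch
  have heq : (⟨e :: L, ne₁, ch₁⟩ : Word Mf) = ⟨L ++ [e], ne₂, ch₂⟩ :=
    word_prod_injective (by rw [hp1, hp2, hcomm])
  have hl : e :: L = L ++ [e] := congrArg Monoid.CoprodI.Word.toList heq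
  cases L with
  | nil => exact hL rfl
  | cons l₀ rest =>
    simp only [List.cons_append, List.cons.injEq] at hl
    exact hhd l₀ (by simp) (congrArg Sigma.fst hl.1)

open Monoid.CoprodI in
lemma diffEnds (i₀ : Bool) (m₀ : Mf i₀) (L' : List (Σ i, Mf i))
    (hne : ∀ l ∈ (⟨i₀, m₀⟩ :: L' : List (Σ i, Mf i)), l.2 ≠ 1)
    (hch : (⟨i₀, m₀⟩ :: L' : List (Σ i, Mf i)).IsChain fun l l' => l.1 ≠ l'.1)
    (e : Mf i₀) (he : e ≠ 1)
    (hlast : ((⟨i₀, m₀⟩ :: L' : List (Σ i, Mf i)).getLast (by simp)).1 ≠ i₀)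
    (hcomm : Word.prod (⟨⟨i₀, m₀⟩ :: L', hne, hch⟩ : Word Mf) * Monoid.CoprodI.of e =
      Monoid.CoprodI.of e * Word.prod (⟨⟨i₀, m₀⟩ :: L', hne, hch⟩ : Word Mf)) : False := by
  have hhd : ∀ p ∈ L'.head?, i₀ ≠ p.1 := (List.isChain_cons.mp hch).1
  have htne : ∀ l ∈ L', l.2 ≠ 1 := fun l hl => hne l (List.mem_cons_of_mem _ hl)
  have htch := hch.tail
  have ne₂ : ∀ l ∈ (⟨i₀, m₀⟩ :: L' : List (Σ i, Mf i)) ++ [⟨i₀, e⟩], l.2 ≠ 1 := by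
    rintro l hl
    rcases List.mem_append.mp hl with hl | hl
    · exact hne l hl
    · simp only [List.mem_singleton] at hl; subst hl; exact he
  have ch₂ := chain_append_single _ hch (by simp) ⟨i₀, e⟩ hlast
  have hp2 : Word.prod (⟨(⟨i₀, m₀⟩ :: L') ++ [⟨i₀, e⟩], ne₂, ch₂⟩ : Word Mf) =
      Word.prod (⟨⟨i₀, m₀⟩ :: L', hne, hch⟩ : Word Mf) * Monoid.CoprodI.of e :=
    word_prod_append _ _ ne₂ ch₂ hne hch
  have hw : Word.prod (⟨⟨i₀, m₀⟩ :: L', hne, hch⟩ : Word Mf) =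
      Monoid.CoprodI.of m₀ * Word.prod (⟨L', htne, htch⟩ : Word Mf) :=
    word_prod_cons _ _ hne hch
  by_cases hg : e * m₀ = 1
  · have hkey : Word.prod (⟨(⟨i₀, m₀⟩ :: L') ++ [⟨i₀, e⟩], ne₂, ch₂⟩ : Word Mf) =
        Word.prod (⟨L', htne, htch⟩ : Word Mf) := by
      rw [hp2, hcomm, hw, ← mul_assoc, ← map_mul, hg, map_one, one_mul]
    have heq := word_prod_injective hkey
    have hlen := congrArg (fun w : Word Mf => w.toList.length) heq
    simp at hlen
    omega
  · have ne₁ : ∀ l ∈ (⟨i₀, e * m₀⟩ :: L' : List (Σ i, Mf i)), l.2 ≠ 1 := by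
      rintro l hl
      rcases List.mem_cons.mp hl with rfl | hl
      · exact hg
      · exact htne l hl
    have ch₁ : (⟨i₀, e * m₀⟩ :: L' : List (Σ i, Mf i)).IsChain fun l l' => l.1 ≠ l'.1 :=
      List.isChain_cons.mpr ⟨hhd, htch⟩
    have hkey : Word.prod (⟨(⟨i₀, m₀⟩ :: L') ++ [⟨i₀, e⟩], ne₂, ch₂⟩ : Word Mf) =
        Word.prod (⟨⟨i₀, e * m₀⟩ :: L', ne₁, ch₁⟩ : Word Mf) := by
      rw [hp2, hcomm, hw, word_prod_cons, ← mul_assoc, ← map_mul]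
    have heq := word_prod_injective hkey
    have hlen := congrArg (fun w : Word Mf => w.toList.length) heq
    simp at hlen

open Monoid.CoprodI in
lemma eq_one_of_comm (h : H) (hX : h * X = X * h) (hY : h * Y = Y * h) : h = 1 := by
  obtain ⟨w, rfl⟩ : ∃ w : Word Mf, Word.prod w = h :=
    ⟨Word.equiv h, (Word.equiv (M := Mf)).left_inv h⟩
  rcases w with ⟨L, hne, hch⟩
  cases L with
  | nil => simp [Word.prod]
  | cons l₀ L' =>
  exfalso
  obtain ⟨i, m⟩ := l₀
  have hLne : (⟨i, m⟩ :: L' : List (Σ i, Mf i)) ≠ [] := by simp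
  cases i with
  | true =>
    cases hj : ((⟨true, m⟩ :: L' : List (Σ i, Mf i)).getLast hLne).1 with
    | true =>
      refine sameEnds _ hne hch hLne ⟨false, y⟩ (by decide) ?_ ?_ hY
      · intro p hp
        simp only [List.head?_cons, Option.mem_def, Option.some.injEq] at hp
        subst hp; simp
      · rw [hj]; simp
    | false =>
      exact diffEnds true m L' hne hch x (by decide) (by rw [hj]; simp) hX
  | false =>
    cases hj : ((⟨false, m⟩ :: L' : List (Σ i, Mf i)).getLast hLne).1 with
    | false =>
      refine sameEnds _ hne hch hLne ⟨true, x⟩ (by decide) ?_ ?_ hX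
      · intro p hp
        simp only [List.head?_cons, Option.mem_def, Option.some.injEq] at hp
        subst hp; simp
      · rw [hj]; simp
    | true =>
      exact diffEnds false m L' hne hch y (by decide) (by rw [hj]; simp) hY

end B3Aux

theorem stmt_14 :
    Subgroup.center (PresentedGroup A2BraidRels) =
      Subgroup.zpowers
        (((PresentedGroup.of 0 : PresentedGroup A2BraidRels) * PresentedGroup.of 1) ^ 3) := by
  apply le_antisymm
  · intro z hz
    have hcomm := Subgroup.mem_center_iff.mp hz
    have hπz : B3Aux.π z = 1 := by
      apply B3Aux.eq_one_of_comm
      · rw [← B3Aux.π_d0, ← map_mul, ← map_mul, hcomm B3Aux.Δ₀]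
      · rw [← B3Aux.π_ab, ← map_mul, ← map_mul, hcomm (B3Aux.a * B3Aux.b)]
    have h2 := congrArg B3Aux.ψ hπz
    rw [B3Aux.ψπ z, map_one] at h2
    exact (QuotientGroup.eq_one_iff z).mp h2
  · exact Subgroup.zpowers_le.mpr B3Aux.delta_central
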